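/- For every n ≥ 2 and every odd positive integer ℓ, the subgroups B_n[ℓ] and B_n[2] together generate B_n; equivalently, the composite B_n[ℓ] ↪ B_n → B_n/B_n[2] is surjective. -/

import Mathlib

open Matrix

/-- The braid relations on `m` generators `σ_1, …, σ_m` (0-indexed by `Fin m`). -/
def braidRels (m : ℕ) : Set (FreeGroup (Fin m)) :=
  {r | (∃ i j : Fin m, (i : ℕ) + 1 = (j : ℕ) ∧
          r = FreeGroup.of i * FreeGroup.of j * FreeGroup.of i *
              (FreeGroup.of j * FreeGroup.of i * FreeGroup.of j)⁻¹) ∨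
       (∃ i j : Fin m, (i : ℕ) + 2 ≤ (j : ℕ) ∧
          r = FreeGroup.of i * FreeGroup.of j * (FreeGroup.of j * FreeGroup.of i)⁻¹)}

/-- The braid group on `n` strands, presented on generators `σ_1, …, σ_{n-1}`. -/
def BraidGroup (n : ℕ) : Type := PresentedGroup (braidRels (n - 1))

instance (n : ℕ) : Group (BraidGroup n) :=
  inferInstanceAs (Group (PresentedGroup (braidRels (n - 1))))

/-- The generator `σ_{k+1}` (in 1-indexed notation) of the braid group. -/
def braidGen (n : ℕ) (k : Fin (n - 1)) : BraidGroup n := PresentedGroup.of k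

/-- The matrix of the generator `σ_{k+1}` under the reduced integral Burau representation. -/
def burauMatrix (n : ℕ) (k : Fin (n - 1)) : Matrix (Fin (n - 1)) (Fin (n - 1)) ℤ :=
  Matrix.of fun a b =>
    if a = b then 1
    else if (a : ℕ) + 1 = (k : ℕ) ∧ b = k then -1
    else if (a : ℕ) = (k : ℕ) + 1 ∧ b = k then 1
    else 0

/-- `ρ` is the reduced integral Burau representation iff it takes the prescribed
values on the generators. -/
def IsBurau (n : ℕ) (ρ : BraidGroup n →* GL (Fin (n - 1)) ℤ) : Prop :=
  ∀ k : Fin (n - 1),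
    (ρ (braidGen n k) : Matrix (Fin (n - 1)) (Fin (n - 1)) ℤ) = burauMatrix n k

/-- The level `ℓ` congruence subgroup `B_n[ℓ]`: the kernel of the composition of the
reduced integral Burau representation with entrywise reduction mod `ℓ`. -/
def congSubgroup (n : ℕ) (ρ : BraidGroup n →* GL (Fin (n - 1)) ℤ) (ℓ : ℕ) :
    Subgroup (BraidGroup n) :=
  ((Matrix.GeneralLinearGroup.map (Int.castRingHom (ZMod ℓ))).comp ρ).ker

instance (n : ℕ) (ρ : BraidGroup n →* GL (Fin (n - 1)) ℤ) (ℓ : ℕ) :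
    (congSubgroup n ρ ℓ).Normal :=
  MonoidHom.normal_ker _

instance (n : ℕ) (ρ : BraidGroup n →* GL (Fin (n - 1)) ℤ) (ℓ : ℕ)
    (K : Subgroup (BraidGroup n)) : ((congSubgroup n ρ ℓ).subgroupOf K).Normal :=
  Subgroup.Normal.subgroupOf (MonoidHom.normal_ker _) K

private lemma burau_sq (n : ℕ) (k : Fin (n-1)) :
    (burauMatrix n k - 1) * (burauMatrix n k - 1) = 0 := by
  ext a b
  rw [Matrix.mul_apply, Matrix.zero_apply]
  apply Finset.sum_eq_zero
  intro c _
  rcases eq_or_ne c k with rfl | hc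
  · have h0 : (burauMatrix n c - 1) c b = 0 := by
      rcases eq_or_ne c b with rfl | h
      · simp [burauMatrix]
      · simp [burauMatrix, Matrix.sub_apply, Matrix.one_apply, h]
    rw [h0, mul_zero]
  · have h0 : (burauMatrix n k - 1) a c = 0 := by
      rcases eq_or_ne a c with rfl | h
      · simp [burauMatrix]
      · simp [burauMatrix, Matrix.sub_apply, Matrix.one_apply, h, hc]
    rw [h0, zero_mul]

private lemma burau_pow (n : ℕ) (k : Fin (n-1)) (m : ℕ) :
    (burauMatrix n k) ^ m = 1 + (m : ℤ) • (burauMatrix n k - 1) := by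
  induction m with
  | zero => simp
  | succ m ih =>
    have hM : burauMatrix n k = 1 + (burauMatrix n k - 1) := by abel
    rw [pow_succ, ih]
    nth_rewrite 2 [hM]
    push_cast
    rw [mul_add, mul_one, add_mul, one_mul, smul_mul_assoc, burau_sq, smul_zero,
      add_zero, add_smul, one_smul]
    abel

private lemma braidGen_pow_mem (n : ℕ) (ρ : BraidGroup n →* GL (Fin (n - 1)) ℤ)
    (hρ : IsBurau n ρ) (k : Fin (n-1)) (m ℓ : ℕ) (h : (m : ZMod ℓ) = 0) :
    braidGen n k ^ m ∈ congSubgroup n ρ ℓ := by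
  rw [congSubgroup, MonoidHom.mem_ker, MonoidHom.comp_apply]
  ext i j
  rw [Matrix.GeneralLinearGroup.map_apply]
  have h1 : (ρ (braidGen n k ^ m) : Matrix (Fin (n-1)) (Fin (n-1)) ℤ) =
      1 + (m : ℤ) • (burauMatrix n k - 1) := by
    rw [map_pow, Units.val_pow_eq_pow_val, hρ k, burau_pow]
  show (Int.castRingHom (ZMod ℓ)) ((ρ (braidGen n k ^ m) : Matrix (Fin (n-1)) (Fin (n-1)) ℤ) i j) = _
  rw [h1]
  simp only [Matrix.add_apply, Matrix.smul_apply, Matrix.sub_apply, Matrix.one_apply,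
    smul_eq_mul, map_add, _root_.map_mul, map_intCast, Units.val_one]
  split <;> simp [Matrix.one_apply, Int.cast_natCast, h, *]

/-- For every `n ≥ 2` and every odd positive integer `ℓ`, the subgroups `B_n[ℓ]` and
`B_n[2]` together generate `B_n`; equivalently, the composite
`B_n[ℓ] ↪ B_n → B_n/B_n[2]` is surjective. -/
theorem congSubgroup_sup_congSubgroup_two (n : ℕ) (hn : 2 ≤ n) (ℓ : ℕ) (hℓ : 0 < ℓ)
    (hodd : Odd ℓ)
    (ρ : BraidGroup n →* GL (Fin (n - 1)) ℤ) (hρ : IsBurau n ρ) :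
    congSubgroup n ρ ℓ ⊔ congSubgroup n ρ 2 = ⊤ ∧
      Function.Surjective
        ((QuotientGroup.mk' (congSubgroup n ρ 2)).comp
          (congSubgroup n ρ ℓ).subtype) := by
  obtain ⟨t, ht⟩ := hodd
  have meml : ∀ k, braidGen n k ^ ℓ ∈ congSubgroup n ρ ℓ := fun k =>
    braidGen_pow_mem n ρ hρ k ℓ ℓ (ZMod.natCast_self ℓ)
  have mem2 : ∀ k, braidGen n k ^ (ℓ - 1) ∈ congSubgroup n ρ 2 := fun k =>
    braidGen_pow_mem n ρ hρ k (ℓ - 1) 2 (by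
      have h' : ℓ - 1 = 2 * t := by omega
      rw [h', Nat.cast_mul, ZMod.natCast_self, zero_mul])
  have key : ∀ k, QuotientGroup.mk' (congSubgroup n ρ 2) (braidGen n k ^ ℓ)
      = QuotientGroup.mk' (congSubgroup n ρ 2) (braidGen n k) := by
    intro k
    rw [QuotientGroup.mk'_apply, QuotientGroup.mk'_apply, QuotientGroup.eq]
    have hl : braidGen n k ^ ℓ = braidGen n k ^ (ℓ - 1) * braidGen n k := by
      rw [← pow_succ]; congr 1; omega
    rw [hl, _root_.mul_inv_rev, mul_assoc, ← mul_assoc]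
    exact Subgroup.Normal.conj_mem' inferInstance _ (inv_mem (mem2 k)) _
  have hsurj : Function.Surjective
      ((QuotientGroup.mk' (congSubgroup n ρ 2)).comp
        (congSubgroup n ρ ℓ).subtype) := by
    rw [← MonoidHom.range_eq_top, eq_top_iff]
    have htop : (⊤ : Subgroup (BraidGroup n ⧸ congSubgroup n ρ 2)) =
        Subgroup.map (QuotientGroup.mk' (congSubgroup n ρ 2)) ⊤ :=
      (Subgroup.map_top_of_surjective _ (QuotientGroup.mk'_surjective _)).symm
    erw [htop, ← PresentedGroup.closure_range_of (braidRels (n - 1)),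
      MonoidHom.map_closure]
    rw [Subgroup.closure_le]
    rintro _ ⟨_, ⟨k, rfl⟩, rfl⟩
    exact ⟨⟨braidGen n k ^ ℓ, meml k⟩, key k⟩
  refine ⟨?_, hsurj⟩
  rw [Subgroup.eq_top_iff']
  intro g
  obtain ⟨x, hx⟩ := hsurj (QuotientGroup.mk' (congSubgroup n ρ 2) g)
  rw [MonoidHom.comp_apply, Subgroup.coe_subtype, QuotientGroup.mk'_apply,
    QuotientGroup.mk'_apply, QuotientGroup.eq] at hx
  have hg : g = (x : BraidGroup n) * ((x : BraidGroup n)⁻¹ * g) := by group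
  rw [hg]
  exact Subgroup.mul_mem _ (Subgroup.mem_sup_left x.2) (Subgroup.mem_sup_right hx)
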